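/- Let k ≥ 2 be an integer and define the optimal degree d(r) = ⌊(k+1)/(k-r)⌋ for integers 0 ≤ r ≤ k-2, and d(k-1) = k. Then for every integer r with 0 ≤ r ≤ k-1, the revealing probability satisfies p(d(r), r) ≥ 1/e, where e is Euler's number. -/

import Mathlib

/-- The revealing probability of an encoding symbol of degree `d` when `r` of the `k`
message symbols are known: `p(d, r) = (k - r) · C(r, d-1) / C(k, d)`. -/
def revealProb (k d r : ℕ) : ℚ :=
  ((k : ℚ) - r) * (r.choose (d - 1)) / (k.choose d)

/-- The optimal degree: `d(r) = ⌊(k+1)/(k-r)⌋` for `0 ≤ r ≤ k-2`, and `d(k-1) = k`. -/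
def optDeg (k r : ℕ) : ℕ :=
  if r = k - 1 then k else ⌊((k : ℚ) + 1) / ((k : ℚ) - r)⌋₊

lemma descF_bound (q : ℚ) (hq : 0 ≤ q) :
    ∀ (n R K : ℕ), (∀ j : ℕ, j < n → (j : ℚ) ≤ K) →
      (∀ j : ℕ, j < n → q * ((K : ℚ) - j) ≤ (R : ℚ) - j) →
      q ^ n * (K.descFactorial n : ℚ) ≤ (R.descFactorial n : ℚ)
  | 0, R, K, _, _ => by simp
  | (n+1), R, K, hK, hRK => by
      have hKn : (n : ℚ) ≤ K := hK n (Nat.lt_succ_self n)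
      have hKn' : n ≤ K := by exact_mod_cast hKn
      have h1 : q * ((K : ℚ) - n) ≤ (R : ℚ) - n := hRK n (Nat.lt_succ_self n)
      have hRn : (0:ℚ) ≤ (R:ℚ) - (n:ℚ) := le_trans (mul_nonneg hq (by linarith)) h1
      have hRn' : n ≤ R := by exact_mod_cast (by linarith : (n:ℚ) ≤ (R:ℚ))
      have IH := descF_bound q hq n R K (fun j hj => hK j (hj.trans (Nat.lt_succ_self n)))
        (fun j hj => hRK j (hj.trans (Nat.lt_succ_self n)))
      rw [Nat.descFactorial_succ, Nat.descFactorial_succ, Nat.cast_mul, Nat.cast_mul,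
        Nat.cast_sub hKn', Nat.cast_sub hRn']
      calc q ^ (n+1) * (((K:ℚ) - n) * (K.descFactorial n : ℚ))
          = (q * ((K:ℚ) - n)) * (q ^ n * (K.descFactorial n : ℚ)) := by ring
        _ ≤ ((R:ℚ) - n) * (R.descFactorial n : ℚ) :=
            mul_le_mul h1 IH (mul_nonneg (pow_nonneg hq n) (by positivity)) hRn

/-- Pure real inequality core. -/
lemma real_core (M D K : ℝ) (n : ℕ) (hn : (n:ℝ) = D - 1)
    (hM2 : 2 ≤ M) (hD1 : 1 ≤ D) (hK2 : 2 ≤ K) (hDK : D ≤ K)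
    (hKMD : K + 2 ≤ M * (D + 1)) (hBR1 : 1 ≤ K - D + 2 - M)
    (hcases : (M * D = K + 1 ∧ 2 ≤ D) ∨ M * D ≤ K) :
    1 / Real.exp 1 ≤ (M * D / K) * (((K - D + 2 - M) / (K - D + 1)) ^ n) := by
  have hAR1 : (1:ℝ) ≤ K - D + 1 := by linarith
  have hARpos : (0:ℝ) < K - D + 1 := by linarith
  have hBRpos : (0:ℝ) < K - D + 2 - M := by linarith
  have hMDpos : (0:ℝ) < M * D := by nlinarith
  have hKpos : (0:ℝ) < K := by linarith
  have hc0 : 0 ≤ (M - 1) / (K - D + 2 - M) := div_nonneg (by linarith) hBRpos.le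
  have hpow : ((K - D + 1) / (K - D + 2 - M)) ^ n
      ≤ Real.exp ((n:ℝ) * ((M - 1) / (K - D + 2 - M))) := by
    have h1 : (K - D + 1) / (K - D + 2 - M) = 1 + (M - 1) / (K - D + 2 - M) := by
      field_simp
      ring
    have h2 : 1 + (M - 1) / (K - D + 2 - M) ≤ Real.exp ((M - 1) / (K - D + 2 - M)) := by
      have := Real.add_one_le_exp ((M - 1) / (K - D + 2 - M)); linarith
    calc ((K - D + 1) / (K - D + 2 - M)) ^ n
        = (1 + (M - 1) / (K - D + 2 - M)) ^ n := by rw [h1]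
      _ ≤ (Real.exp ((M - 1) / (K - D + 2 - M))) ^ n :=
          pow_le_pow_left₀ (by linarith) h2 n
      _ = Real.exp ((n:ℝ) * ((M - 1) / (K - D + 2 - M))) := by rw [Real.exp_nat_mul]
  have hpref : K / (M * D) ≤ Real.exp ((K - M * D) / (M * D)) := by
    have h1 : K / (M * D) = 1 + (K - M * D) / (M * D) := by
      field_simp
      ring
    have h2 := Real.add_one_le_exp ((K - M * D) / (M * D))
    linarith
  have hxy : (n:ℝ) * ((M - 1) / (K - D + 2 - M)) + (K - M * D) / (M * D) ≤ 1 := by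
    rcases hcases with ⟨hmdR, hD2⟩ | hge
    · have hBReq : K - D + 2 - M = (M - 1) * (D - 1) := by nlinarith
      have hm1ne : (M - 1) ≠ 0 := ne_of_gt (by linarith)
      have hd1ne : (D - 1) ≠ 0 := ne_of_gt (by linarith)
      have hcval : (n:ℝ) * ((M - 1) / (K - D + 2 - M)) = 1 := by
        rw [hn, hBReq]
        field_simp
      have hyneg : (K - M * D) / (M * D) ≤ 0 :=
        div_nonpos_of_nonpos_of_nonneg (by linarith) (by linarith)
      linarith
    · have ht0 : (0:ℝ) ≤ K - M * D := by linarith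
      have htm2 : K - M * D ≤ M - 2 := by nlinarith
      rw [hn, ← mul_div_assoc]
      rw [div_add_div _ _ (ne_of_gt hBRpos) (ne_of_gt hMDpos), div_le_one (by positivity)]
      have hBle : K - D + 2 - M ≤ (M - 1) * D := by nlinarith
      have h1 : (K - M * D) * (K - D + 2 - M) ≤ (K - M * D) * ((M - 1) * D) :=
        mul_le_mul_of_nonneg_left hBle ht0
      have h2 : (K - M * D) * ((M - 1) * D) ≤ ((K - M * D) + 1) * (M * D) := by
        apply mul_le_mul (by linarith) (by nlinarith) (by nlinarith) (by linarith)
      nlinarith [h1, h2]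
  have hqpow_pos : (0:ℝ) < ((K - D + 2 - M) / (K - D + 1)) ^ n := by positivity
  have hstep1 : Real.exp (-((n:ℝ) * ((M - 1) / (K - D + 2 - M))))
      ≤ ((K - D + 2 - M) / (K - D + 1)) ^ n := by
    rw [Real.exp_neg, inv_le_iff_one_le_mul₀ (Real.exp_pos _)]
    calc (1:ℝ) = ((K - D + 2 - M)/(K - D + 1))^n * ((K - D + 1)/(K - D + 2 - M))^n := by
          rw [← mul_pow, div_mul_div_comm, mul_comm (K - D + 2 - M) (K - D + 1),
            div_self (by positivity), one_pow]
      _ ≤ ((K - D + 2 - M)/(K - D + 1))^n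
            * Real.exp ((n:ℝ) * ((M - 1) / (K - D + 2 - M))) :=
          mul_le_mul_of_nonneg_left hpow (le_of_lt hqpow_pos)
  have hstep2 : Real.exp (-((K - M * D) / (M * D))) ≤ M * D / K := by
    rw [Real.exp_neg, inv_le_iff_one_le_mul₀ (Real.exp_pos _)]
    have hKMDpos : (0:ℝ) < M * D / K := by positivity
    calc (1:ℝ) = (M*D/K) * (K/(M*D)) := by field_simp
      _ ≤ (M*D/K) * Real.exp ((K - M * D) / (M * D)) :=
          mul_le_mul_of_nonneg_left hpref (le_of_lt hKMDpos)
  rw [one_div, ← Real.exp_neg]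
  calc Real.exp (-1)
      ≤ Real.exp (-((n:ℝ) * ((M - 1) / (K - D + 2 - M)) + (K - M * D) / (M * D))) := by
        apply Real.exp_le_exp.mpr; linarith
    _ = Real.exp (-((K - M * D) / (M * D)))
          * Real.exp (-((n:ℝ) * ((M - 1) / (K - D + 2 - M)))) := by
        rw [← Real.exp_add]; ring_nf
    _ ≤ (M * D / K) * (((K - D + 2 - M) / (K - D + 1)) ^ n) :=
        mul_le_mul hstep2 hstep1 (le_of_lt (Real.exp_pos _)) (by positivity)

/-- The real/analytic part of the argument, stated for naturals. -/
lemma real_side (m d k d' : ℕ) (hm2 : 2 ≤ m) (hd' : d = d' + 1) (hk2 : 2 ≤ k)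
    (hdk : d ≤ k) (hmdk : m * d ≤ k + 1) (hkmd : k + 2 ≤ m * (d + 1))
    (hmd_k1 : m + d ≤ k + 1) :
    1 / Real.exp 1 ≤
      ((m:ℝ) * d / k) * ((((k:ℝ) - d + 2 - m) / ((k:ℝ) - d + 1)) ^ d') := by
  apply real_core
  · rw [hd']; push_cast; ring
  · exact_mod_cast hm2
  · have : 1 ≤ d := by omega
    exact_mod_cast this
  · exact_mod_cast hk2
  · exact_mod_cast hdk
  · have : ((k+2 : ℕ):ℝ) ≤ ((m*(d+1) : ℕ):ℝ) := by exact_mod_cast hkmd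
    push_cast at this; linarith
  · have : ((m + d : ℕ):ℝ) ≤ ((k+1 : ℕ):ℝ) := by exact_mod_cast hmd_k1
    push_cast at this; linarith
  · rcases Nat.lt_or_ge k (m * d) with hlt | hge
    · left
      have hmd : m * d = k + 1 := by omega
      have hd2 : 2 ≤ d := by
        rcases Nat.lt_or_ge d 2 with h | h
        · exfalso
          have hd1 : d = 1 := by omega
          rw [hd1] at hmd
          omega
        · exact h
      constructor
      · exact_mod_cast hmd
      · exact_mod_cast hd2
    · right
      have : ((m*d : ℕ):ℝ) ≤ ((k:ℕ):ℝ) := by exact_mod_cast hge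
      push_cast at this; linarith

/-- For `k ≥ 2` and `0 ≤ r ≤ k-1`, the revealing probability at the optimal degree
satisfies `p(d(r), r) ≥ 1/e`. -/
theorem revealing_probability_at_optimal_degree_ge_inv_e
    (k : ℕ) (hk : 2 ≤ k) (r : ℕ) (hr : r ≤ k - 1) :
    1 / Real.exp 1 ≤ ((revealProb k (optDeg k r) r : ℚ) : ℝ) := by
  have hexp1 : (1:ℝ) ≤ Real.exp 1 := by
    have := Real.add_one_le_exp (1:ℝ); linarith [this]
  by_cases hcase : r = k - 1
  · -- trivial case: p = 1
    have hk1 : 1 ≤ k := by omega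
    have hod : optDeg k r = k := by rw [optDeg, if_pos hcase]
    have h1 : revealProb k (optDeg k r) r = 1 := by
      rw [hod, revealProb, hcase, Nat.choose_self, Nat.choose_self]
      have hc : ((k - 1 : ℕ) : ℚ) = (k:ℚ) - 1 := by
        push_cast [hk1]; ring
      rw [hc]; norm_num
    rw [h1]
    rw [div_le_iff₀ (by positivity)]
    push_cast
    linarith
  · -- main case
    have hk1 : 1 ≤ k := by omega
    have hrk2 : r + 2 ≤ k := by omega
    set m := k - r with hm
    have hm2 : 2 ≤ m := by omega
    have hmk : m ≤ k := by omega
    have hkr : (k:ℚ) - r = (m:ℚ) := by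
      rw [hm]; push_cast [show r ≤ k by omega]; ring
    set d := optDeg k r with hdDef
    have hd_eq : d = ⌊((k : ℚ) + 1) / ((k : ℚ) - r)⌋₊ := by
      rw [hdDef, optDeg, if_neg hcase]
    rw [hkr] at hd_eq
    have hmpos : (0:ℚ) < (m:ℚ) := by positivity
    have hd1 : 1 ≤ d := by
      rw [hd_eq]
      apply Nat.le_floor
      rw [Nat.cast_one, le_div_iff₀ hmpos]
      have : (m:ℚ) ≤ (k:ℚ) := by exact_mod_cast hmk
      linarith
    have hdu : (m:ℚ) * d ≤ (k:ℚ) + 1 := by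
      have h := Nat.floor_le (R := ℚ) (show (0:ℚ) ≤ ((k:ℚ)+1)/(m:ℚ) by positivity)
      rw [← hd_eq] at h
      rw [mul_comm]
      calc (d:ℚ) * m ≤ (((k:ℚ)+1)/(m:ℚ)) * m :=
            mul_le_mul_of_nonneg_right h (le_of_lt hmpos)
        _ = (k:ℚ) + 1 := by field_simp
    have hdl : (k:ℚ) + 1 < (m:ℚ) * ((d:ℚ) + 1) := by
      have h := Nat.lt_floor_add_one (((k:ℚ)+1)/(m:ℚ))
      rw [← hd_eq] at h
      calc (k:ℚ) + 1 = (((k:ℚ)+1)/(m:ℚ)) * m := by field_simp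
        _ < ((d:ℚ) + 1) * m := mul_lt_mul_of_pos_right h hmpos
        _ = (m:ℚ) * ((d:ℚ)+1) := by ring
    have hmdk : m * d ≤ k + 1 := by
      have : ((m*d : ℕ):ℚ) ≤ ((k+1 : ℕ):ℚ) := by push_cast; linarith
      exact_mod_cast this
    have hkmd : k + 2 ≤ m * (d + 1) := by
      have h : ((k+1 : ℕ):ℚ) < ((m*(d+1) : ℕ):ℚ) := by push_cast; linarith
      have := Nat.cast_lt (α := ℚ) |>.mp h
      omega
    have hdk : d ≤ k := by
      have h2d : 2 * d ≤ m * d := Nat.mul_le_mul_right d hm2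
      omega
    have hmd_k1 : m + d ≤ k + 1 := by
      rcases Nat.lt_or_ge d 2 with hd2 | hd2
      · omega
      · have := Nat.add_le_mul hm2 hd2
        omega
    obtain ⟨d', hd'⟩ : ∃ d', d = d' + 1 := ⟨d - 1, by omega⟩
    obtain ⟨k', hk'⟩ : ∃ k', k = k' + 1 := ⟨k - 1, by omega⟩
    have hd'k' : d' ≤ k' := by omega
    -- rational quantities
    have hA1 : (1:ℚ) ≤ (k:ℚ) - d + 1 := by
      have : (d:ℚ) ≤ (k:ℚ) := by exact_mod_cast hdk
      linarith
    have hB1 : (1:ℚ) ≤ (k:ℚ) - d + 2 - m := by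
      have : ((m + d : ℕ):ℚ) ≤ ((k+1 : ℕ):ℚ) := by exact_mod_cast hmd_k1
      push_cast at this
      linarith
    have hApos : (0:ℚ) < (k:ℚ) - d + 1 := by linarith
    have hBpos : (0:ℚ) < (k:ℚ) - d + 2 - m := by linarith
    have hq0 : (0:ℚ) ≤ ((k:ℚ) - d + 2 - m) / ((k:ℚ) - d + 1) := by positivity
    -- hypotheses for descF_bound
    have hhyp1 : ∀ j : ℕ, j < d' → (j : ℚ) ≤ (k' : ℚ) := by
      intro j hj
      have : j ≤ k' := by omega
      exact_mod_cast this
    have hhyp2 : ∀ j : ℕ, j < d' →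
        (((k:ℚ) - d + 2 - m) / ((k:ℚ) - d + 1)) * ((k' : ℚ) - j) ≤ (r : ℚ) - j := by
      intro j hj
      have hjq : (j:ℚ) + 2 ≤ (d:ℚ) := by
        have : j + 2 ≤ d := by omega
        exact_mod_cast this
      have hk'c : (k':ℚ) = (k:ℚ) - 1 := by
        rw [hk']; push_cast; ring
      have hrc : (r:ℚ) = (k:ℚ) - m := by
        have h := hkr; linarith
      have hAX : (k:ℚ) - d + 1 ≤ (k:ℚ) - 1 - j := by linarith
      have hXpos : (0:ℚ) < (k:ℚ) - 1 - j := by linarith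
      rw [hk'c, hrc]
      have hm1' : (1:ℚ) ≤ (m:ℚ) - 1 := by
        have : (2:ℚ) ≤ (m:ℚ) := by exact_mod_cast hm2
        linarith
      have key : (((k:ℚ) - d + 2 - m) / ((k:ℚ) - d + 1)) * ((k:ℚ) - 1 - j)
          ≤ ((k:ℚ) - 1 - j) - ((m:ℚ) - 1) := by
        rw [div_mul_eq_mul_div, div_le_iff₀ hApos]
        have hmulAX : ((m:ℚ) - 1) * ((k:ℚ) - d + 1) ≤ ((m:ℚ) - 1) * ((k:ℚ) - 1 - j) :=
          mul_le_mul_of_nonneg_left hAX (by linarith)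
        nlinarith [hmulAX]
      calc (((k:ℚ) - d + 2 - m) / ((k:ℚ) - d + 1)) * ((k:ℚ) - 1 - (j:ℚ))
          ≤ ((k:ℚ) - 1 - j) - ((m:ℚ) - 1) := key
        _ = (k:ℚ) - (m:ℚ) - (j:ℚ) := by ring
    have key := descF_bound _ hq0 d' r k' hhyp1 hhyp2
    -- identity for revealProb
    have hdfK : (0:ℚ) < (k'.descFactorial d' : ℚ) := by
      have h0 : k'.descFactorial d' ≠ 0 := by
        intro h
        exact absurd (Nat.descFactorial_eq_zero_iff_lt.mp h) (by omega)
      have : 0 < k'.descFactorial d' := Nat.pos_of_ne_zero h0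
      exact_mod_cast this
    have hident : revealProb k d r
        = ((m:ℚ) * d / k) * ((r.descFactorial d' : ℚ) / (k'.descFactorial d' : ℚ)) := by
      rw [revealProb, hkr]
      have hdm1 : d - 1 = d' := by omega
      rw [hdm1]
      have hc1 : (r.choose d' : ℚ) = (r.descFactorial d' : ℚ) / (Nat.factorial d' : ℚ) := by
        rw [eq_div_iff (by positivity)]
        rw [← Nat.cast_mul, mul_comm, ← Nat.descFactorial_eq_factorial_mul_choose]
      have hc2 : (k.choose d : ℚ)
          = ((k:ℚ) * (k'.descFactorial d' : ℚ)) / ((d:ℚ) * (Nat.factorial d' : ℚ)) := by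
        rw [eq_div_iff (by positivity)]
        have hnat : k.descFactorial d = k * k'.descFactorial d' := by
          rw [hk', hd', Nat.succ_descFactorial_succ]
        have hcast : (k.descFactorial d : ℚ) = (k:ℚ) * (k'.descFactorial d' : ℚ) := by
          rw [hnat]; push_cast; ring
        have hfac : (Nat.factorial d : ℚ) = (d:ℚ) * (Nat.factorial d' : ℚ) := by
          rw [hd', Nat.factorial_succ]; push_cast; ring
        calc (k.choose d : ℚ) * ((d:ℚ) * (Nat.factorial d' : ℚ))
            = (k.choose d : ℚ) * (Nat.factorial d : ℚ) := by rw [hfac]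
          _ = (k.descFactorial d : ℚ) := by
              rw [← Nat.cast_mul, mul_comm, ← Nat.descFactorial_eq_factorial_mul_choose]
          _ = (k:ℚ) * (k'.descFactorial d' : ℚ) := hcast
      rw [hc1, hc2]
      have hkpos : (0:ℚ) < (k:ℚ) := by positivity
      have hdpos : (0:ℚ) < (d:ℚ) := by
        have : (1:ℚ) ≤ (d:ℚ) := by exact_mod_cast hd1
        linarith
      field_simp
    have hQ : ((m:ℚ) * d / k) * ((((k:ℚ) - d + 2 - m) / ((k:ℚ) - d + 1)) ^ d')
        ≤ revealProb k d r := by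
      rw [hident]
      apply mul_le_mul_of_nonneg_left _ (by positivity)
      rw [le_div_iff₀ hdfK]
      linarith [key]
    have hR : ((((m:ℚ) * d / k) * ((((k:ℚ) - d + 2 - m) / ((k:ℚ) - d + 1)) ^ d') : ℚ) : ℝ)
        ≤ ((revealProb k d r : ℚ) : ℝ) := by exact_mod_cast hQ
    refine le_trans ?_ hR
    have hcast_eq : ((((m:ℚ) * d / k) * ((((k:ℚ) - d + 2 - m) / ((k:ℚ) - d + 1)) ^ d') : ℚ) : ℝ)
        = ((m:ℝ) * d / k) * ((((k:ℝ) - d + 2 - m) / ((k:ℝ) - d + 1)) ^ d') := by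
      push_cast
      ring
    rw [hcast_eq]
    exact real_side m d k d' hm2 hd' hk hdk hmdk hkmd hmd_k1
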